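/- The dehomogenized Motzkin polynomial 1 + x₁⁴x₂² + x₁²x₂⁴ - 3x₁²x₂² is nonnegative on ℝ² but is not a sum of squares of polynomials. -/

import Mathlib

open MvPolynomial

noncomputable section
namespace MotzkinAux

/-- The exponent vector `(a, b)` as a `Finsupp`. -/
def fd (a b : ℕ) : Fin 2 →₀ ℕ := Finsupp.single 0 a + Finsupp.single 1 b

lemma fd_apply0 (a b : ℕ) : fd a b 0 = a := by simp [fd, Finsupp.single_apply]
lemma fd_apply1 (a b : ℕ) : fd a b 1 = b := by simp [fd, Finsupp.single_apply]

lemma fd_add (a b c d : ℕ) : fd a b + fd c d = fd (a+c) (b+d) := by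
  simp [fd, Finsupp.single_add]; abel

lemma fd_eq_iff {a b c d : ℕ} : fd a b = fd c d ↔ a = c ∧ b = d := by
  constructor
  · intro h
    exact ⟨by simpa [fd_apply0] using congrArg (fun m => m 0) h,
      by simpa [fd_apply1] using congrArg (fun m => m 1) h⟩
  · rintro ⟨rfl, rfl⟩; rfl

lemma eq_fd (m : Fin 2 →₀ ℕ) : m = fd (m 0) (m 1) := by
  ext i
  fin_cases i
  · simp [fd_apply0]
  · simp [fd_apply1]

lemma degree_eq (m : Fin 2 →₀ ℕ) : (m.sum fun _ e => e) = m 0 + m 1 := by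
  rw [Finsupp.sum_fintype]
  · simp [Fin.sum_univ_two]
  · intro; rfl

lemma degree_fd (a b : ℕ) : ((fd a b).sum fun _ e => e) = a + b := by
  rw [degree_eq, fd_apply0, fd_apply1]

/-- Coefficients of the restriction of a polynomial to a line through the origin. -/
lemma coeff_line (w : Fin 2 → ℝ) (q : MvPolynomial (Fin 2) ℝ) (n : ℕ) :
    (MvPolynomial.aeval (fun i => Polynomial.C (w i) * Polynomial.X) q).coeff n
      = MvPolynomial.eval w (homogeneousComponent n q) := by
  induction q using MvPolynomial.induction_on' with
  | monomial m a =>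
    rw [MvPolynomial.aeval_monomial]
    have h1 : (m.prod fun i e => (Polynomial.C (w i) * Polynomial.X) ^ e)
        = Polynomial.C (m.prod fun i e => (w i) ^ e) * Polynomial.X ^ (m.degree) := by
      simp_rw [mul_pow]
      rw [Finsupp.prod_mul, map_finsuppProd]
      congr 1
      · simp [Polynomial.C_pow]
      · rw [Finsupp.degree, Finsupp.prod, Finset.prod_pow_eq_pow_sum]; rfl
    have h2 : homogeneousComponent n (monomial m a) = if m.degree = n then monomial m a else 0 := by
      ext d
      rw [coeff_homogeneousComponent]
      rcases eq_or_ne d m with rfl | hdm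
      · split_ifs with h <;> simp [MvPolynomial.coeff_monomial]
      · split_ifs with h <;> simp [MvPolynomial.coeff_monomial, Ne.symm hdm]
    rw [h1, h2]
    have h3 : algebraMap ℝ (Polynomial ℝ) a = Polynomial.C a := rfl
    rw [h3, ← mul_assoc, ← Polynomial.C_mul]
    have h4 : a * m.prod (fun i e => w i ^ e) = MvPolynomial.eval w (monomial m a) := by
      rw [MvPolynomial.eval_monomial]
    rw [h4, Polynomial.coeff_C_mul, Polynomial.coeff_X_pow]
    split_ifs with h h5 h5
    · simp
    · exact absurd h.symm h5
    · exact absurd h5.symm h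
    · simp
  | add p q hp hq => simp [map_add, hp, hq]

lemma eval_line (w : Fin 2 → ℝ) (q : MvPolynomial (Fin 2) ℝ) (t : ℝ) :
    Polynomial.eval t (MvPolynomial.aeval (fun i => Polynomial.C (w i) * Polynomial.X) q)
      = MvPolynomial.eval (fun i => w i * t) q := by
  induction q using MvPolynomial.induction_on with
  | C a => simp
  | add p q hp hq => simp [hp, hq]
  | mul_X p i hp => simp [hp]

lemma exists_eval_ne (q : MvPolynomial (Fin 2) ℝ) (h : q ≠ 0) : ∃ w : Fin 2 → ℝ,
    MvPolynomial.eval w q ≠ 0 := by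
  by_contra hc
  push_neg at hc
  exact h (MvPolynomial.funext (fun x => by simp [hc x]))

/-- Degree bound: if `q ^ 2` is pointwise dominated by a polynomial of total degree at most 6,
then `q` has total degree at most 3. -/
lemma totalDegree_le_of_sq_le {q p : MvPolynomial (Fin 2) ℝ} (hp : p.totalDegree ≤ 6)
    (h : ∀ z : Fin 2 → ℝ, (MvPolynomial.eval z q)^2 ≤ MvPolynomial.eval z p) :
    q.totalDegree ≤ 3 := by
  by_contra hD
  push_neg at hD
  set D := q.totalDegree with hDdef
  have hq0 : q ≠ 0 := by
    intro h0
    rw [h0] at hDdef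
    simp [totalDegree_zero] at hDdef
    omega
  obtain ⟨m, hm, hmd⟩ := q.support.exists_mem_eq_sup (MvPolynomial.support_nonempty.mpr hq0)
    (fun m : Fin 2 →₀ ℕ => m.sum fun _ e => e)
  have hmD : m.degree = D := by
    rw [hDdef, totalDegree, hmd]; rfl
  have htop : homogeneousComponent D q ≠ 0 := by
    intro h0
    have := coeff_homogeneousComponent (σ := Fin 2) (R := ℝ) D q m
    rw [h0, if_pos hmD] at this
    exact (mem_support_iff.mp hm) (by simpa using this.symm)
  obtain ⟨w, hw⟩ := exists_eval_ne _ htop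
  set r : Polynomial ℝ := MvPolynomial.aeval (fun i => Polynomial.C (w i) * Polynomial.X) q with hr
  set s : Polynomial ℝ := MvPolynomial.aeval (fun i => Polynomial.C (w i) * Polynomial.X) p with hs
  have hrD : r.coeff D ≠ 0 := by
    rw [hr, coeff_line]; exact hw
  have hrne : r ≠ 0 := fun h0 => hrD (by simp [h0])
  have hrdeg : D ≤ r.natDegree := Polynomial.le_natDegree_of_ne_zero hrD
  have hsdeg : s.natDegree ≤ 6 := by
    rw [Polynomial.natDegree_le_iff_coeff_eq_zero]
    intro n hn
    rw [hs, coeff_line, homogeneousComponent_eq_zero _ _ (lt_of_le_of_lt hp hn)]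
    simp
  have hpt : ∀ t : ℝ, Polynomial.eval t (r * r - s) ≤ 0 := by
    intro t
    have hh := h (fun i => w i * t)
    have h1 : Polynomial.eval t r = MvPolynomial.eval (fun i => w i * t) q := eval_line w q t
    have h2 : Polynomial.eval t s = MvPolynomial.eval (fun i => w i * t) p := eval_line w p t
    rw [Polynomial.eval_sub, Polynomial.eval_mul, h1, h2]
    nlinarith [hh]
  set f := r * r - s with hf
  have hrr : (r * r).natDegree = r.natDegree + r.natDegree := Polynomial.natDegree_mul hrne hrne
  have hlt : s.degree < (r * r).degree := by
    apply lt_of_le_of_lt (Polynomial.degree_le_natDegree)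
    rw [Polynomial.degree_eq_natDegree (mul_ne_zero hrne hrne), hrr]
    exact_mod_cast lt_of_le_of_lt (by exact_mod_cast hsdeg) (by exact_mod_cast by omega)
  have hfdeg : f.degree = (r * r).degree := Polynomial.degree_sub_eq_left_of_degree_lt hlt
  have hflead : f.leadingCoeff = (r.leadingCoeff)^2 := by
    have : f = -s + r * r := by rw [hf]; ring
    rw [this, Polynomial.leadingCoeff_add_of_degree_lt (by simpa using hlt),
      Polynomial.leadingCoeff_mul, sq]
  have hfpos : 0 < f.degree := by
    rw [hfdeg, Polynomial.degree_eq_natDegree (mul_ne_zero hrne hrne), hrr]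
    exact_mod_cast by omega
  have htend := Polynomial.tendsto_atTop_of_leadingCoeff_nonneg f hfpos
    (by rw [hflead]; positivity)
  obtain ⟨t, ht⟩ := (htend.eventually_ge_atTop 1).exists
  have := hpt t
  linarith

/-- Index set for monomials. -/
def T0 : Finset (ℕ × ℕ) := Finset.range 4 ×ˢ Finset.range 4

lemma repr3 {q : MvPolynomial (Fin 2) ℝ} (h : q.totalDegree ≤ 3) :
    q = ∑ ab ∈ T0, monomial (fd ab.1 ab.2) (coeff (fd ab.1 ab.2) q) := by
  have hinj : Set.InjOn (fun ab : ℕ × ℕ => fd ab.1 ab.2) T0 := by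
    intro a _ b _ hab
    obtain ⟨h1, h2⟩ := fd_eq_iff.mp hab
    exact Prod.ext h1 h2
  rw [← Finset.sum_image (f := fun m => monomial m (coeff m q)) hinj]
  conv_lhs => rw [as_sum q]
  apply Finset.sum_subset
  · intro m hm
    have hd : m 0 + m 1 ≤ 3 := by
      rw [← degree_eq m]
      exact le_trans (le_totalDegree hm) h
    simp only [Finset.mem_image, T0, Finset.mem_product, Finset.mem_range]
    exact ⟨(m 0, m 1), ⟨by omega, by omega⟩, (eq_fd m).symm⟩
  · intro m _ hm
    rw [notMem_support_iff.mp hm, monomial_zero]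

lemma sq_expand {q : MvPolynomial (Fin 2) ℝ} (h : q.totalDegree ≤ 3) :
    q * q = ∑ ab ∈ T0, ∑ cd ∈ T0,
      monomial (fd (ab.1+cd.1) (ab.2+cd.2)) (coeff (fd ab.1 ab.2) q * coeff (fd cd.1 cd.2) q) := by
  nth_rewrite 1 [repr3 h]
  nth_rewrite 2 [repr3 h]
  rw [Finset.sum_mul_sum]
  simp [MvPolynomial.monomial_mul, fd_add]

lemma coeff_sq_60 {q : MvPolynomial (Fin 2) ℝ} (h : q.totalDegree ≤ 3) :
    coeff (fd 6 0) (q * q) = (coeff (fd 3 0) q)^2 := by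
  rw [sq_expand h]
  simp only [MvPolynomial.coeff_sum, MvPolynomial.coeff_monomial, fd_eq_iff, T0]
  rw [Finset.sum_product]
  simp only [Finset.sum_product, Finset.sum_range_succ, Finset.sum_range_zero]
  norm_num [sq]

lemma coeff_sq_06 {q : MvPolynomial (Fin 2) ℝ} (h : q.totalDegree ≤ 3) :
    coeff (fd 0 6) (q * q) = (coeff (fd 0 3) q)^2 := by
  rw [sq_expand h]
  simp only [MvPolynomial.coeff_sum, MvPolynomial.coeff_monomial, fd_eq_iff, T0]
  rw [Finset.sum_product]
  simp only [Finset.sum_product, Finset.sum_range_succ, Finset.sum_range_zero]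
  norm_num [sq]

lemma coeff_sq_40 {q : MvPolynomial (Fin 2) ℝ} (h : q.totalDegree ≤ 3) :
    coeff (fd 4 0) (q * q)
      = (coeff (fd 2 0) q)^2 + 2 * (coeff (fd 1 0) q * coeff (fd 3 0) q) := by
  rw [sq_expand h]
  simp only [MvPolynomial.coeff_sum, MvPolynomial.coeff_monomial, fd_eq_iff, T0]
  rw [Finset.sum_product]
  simp only [Finset.sum_product, Finset.sum_range_succ, Finset.sum_range_zero]
  norm_num [sq]
  ring

lemma coeff_sq_04 {q : MvPolynomial (Fin 2) ℝ} (h : q.totalDegree ≤ 3) :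
    coeff (fd 0 4) (q * q)
      = (coeff (fd 0 2) q)^2 + 2 * (coeff (fd 0 1) q * coeff (fd 0 3) q) := by
  rw [sq_expand h]
  simp only [MvPolynomial.coeff_sum, MvPolynomial.coeff_monomial, fd_eq_iff, T0]
  rw [Finset.sum_product]
  simp only [Finset.sum_product, Finset.sum_range_succ, Finset.sum_range_zero]
  norm_num [sq]
  ring

lemma coeff_sq_20 {q : MvPolynomial (Fin 2) ℝ} (h : q.totalDegree ≤ 3) :
    coeff (fd 2 0) (q * q)
      = (coeff (fd 1 0) q)^2 + 2 * (coeff (fd 0 0) q * coeff (fd 2 0) q) := by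
  rw [sq_expand h]
  simp only [MvPolynomial.coeff_sum, MvPolynomial.coeff_monomial, fd_eq_iff, T0]
  rw [Finset.sum_product]
  simp only [Finset.sum_product, Finset.sum_range_succ, Finset.sum_range_zero]
  norm_num [sq]
  ring

lemma coeff_sq_02 {q : MvPolynomial (Fin 2) ℝ} (h : q.totalDegree ≤ 3) :
    coeff (fd 0 2) (q * q)
      = (coeff (fd 0 1) q)^2 + 2 * (coeff (fd 0 0) q * coeff (fd 0 2) q) := by
  rw [sq_expand h]
  simp only [MvPolynomial.coeff_sum, MvPolynomial.coeff_monomial, fd_eq_iff, T0]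
  rw [Finset.sum_product]
  simp only [Finset.sum_product, Finset.sum_range_succ, Finset.sum_range_zero]
  norm_num [sq]
  ring

lemma coeff_sq_22 {q : MvPolynomial (Fin 2) ℝ} (h : q.totalDegree ≤ 3) :
    coeff (fd 2 2) (q * q)
      = (coeff (fd 1 1) q)^2 + 2 * (coeff (fd 1 0) q * coeff (fd 1 2) q)
        + 2 * (coeff (fd 0 1) q * coeff (fd 2 1) q)
        + 2 * (coeff (fd 2 0) q * coeff (fd 0 2) q) := by
  have hz : MvPolynomial.coeff (fd 2 2) q = 0 := by
    apply coeff_eq_zero_of_totalDegree_lt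
    have h4 : ∑ i ∈ (fd 2 2).support, fd 2 2 i = 4 := degree_fd 2 2
    omega
  rw [sq_expand h]
  simp only [MvPolynomial.coeff_sum, MvPolynomial.coeff_monomial, fd_eq_iff, T0]
  rw [Finset.sum_product]
  simp only [Finset.sum_product, Finset.sum_range_succ, Finset.sum_range_zero]
  norm_num [sq, hz]
  ring

lemma mono_eq (a b : ℕ) (c : ℝ) :
    (monomial (fd a b) c : MvPolynomial (Fin 2) ℝ) = MvPolynomial.C c * X 0 ^ a * X 1 ^ b := by
  rw [MvPolynomial.X_pow_eq_monomial, MvPolynomial.X_pow_eq_monomial, mul_assoc,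
    MvPolynomial.monomial_mul, MvPolynomial.C_mul_monomial, fd, one_mul, mul_one]

/-- The Motzkin polynomial. -/
def motz : MvPolynomial (Fin 2) ℝ :=
  (1 : MvPolynomial (Fin 2) ℝ) + (X 0)^4 * (X 1)^2 + (X 0)^2 * (X 1)^4 - 3 * (X 0)^2 * (X 1)^2

lemma motz_repr : motz
    = monomial (fd 0 0) 1 + monomial (fd 4 2) 1 + monomial (fd 2 4) 1 - monomial (fd 2 2) 3 := by
  simp only [motz, mono_eq, map_one, map_ofNat]
  ring

lemma td_fd (a b : ℕ) {c : ℝ} (hc : c ≠ 0) :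
    (monomial (fd a b) c : MvPolynomial (Fin 2) ℝ).totalDegree = a + b := by
  rw [MvPolynomial.totalDegree_monomial _ hc, degree_fd]

lemma motz_td : motz.totalDegree ≤ 6 := by
  have hneg : (-(monomial (fd 2 2) (3:ℝ)) : MvPolynomial (Fin 2) ℝ).totalDegree
      = (monomial (fd 2 2) (3:ℝ) : MvPolynomial (Fin 2) ℝ).totalDegree := by
    rw [totalDegree, totalDegree, MvPolynomial.support_neg]
  rw [motz_repr, sub_eq_add_neg]
  refine le_trans (totalDegree_add _ _) (max_le (le_trans (totalDegree_add _ _)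
    (max_le (le_trans (totalDegree_add _ _) (max_le ?_ ?_)) ?_)) ?_) <;>
    (try rw [hneg]) <;> rw [td_fd _ _ (by norm_num)] <;> omega

lemma motz_coeffs :
    coeff (fd 6 0) motz = 0 ∧ coeff (fd 0 6) motz = 0 ∧ coeff (fd 4 0) motz = 0
    ∧ coeff (fd 0 4) motz = 0 ∧ coeff (fd 2 0) motz = 0 ∧ coeff (fd 0 2) motz = 0
    ∧ coeff (fd 2 2) motz = -3 := by
  rw [motz_repr]
  refine ⟨?_, ?_, ?_, ?_, ?_, ?_, ?_⟩ <;>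
    simp [MvPolynomial.coeff_monomial, fd_eq_iff]

lemma isSumSq_exists {R : Type*} [AddCommMonoid R] [Mul R] {p : R} (hp : IsSumSq p) :
    ∃ (n : ℕ) (f : Fin n → R), p = ∑ i, f i * f i := by
  induction hp with
  | zero => exact ⟨0, ![], by simp⟩
  | sq_add a pS ih =>
    obtain ⟨n, f, rfl⟩ := ih
    exact ⟨n+1, Fin.cons a f, by rw [Fin.sum_univ_succ]; simp [Fin.cons]⟩

lemma motz_eval_nonneg (x : Fin 2 → ℝ) : 0 ≤ eval x motz := by
  simp only [motz, map_add, map_sub, map_mul, map_pow, map_one, map_ofNat, eval_X]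
  set u := x 0
  set v := x 1
  nlinarith [sq_nonneg (u*v), sq_nonneg (u^2*v - v), sq_nonneg (u*v^2 - u),
    sq_nonneg (u^2*v^2 - 1), sq_nonneg (u*v*(u-v)), sq_nonneg (u*v*(u+v)),
    sq_nonneg (u^2-v^2), sq_nonneg u, sq_nonneg v]

lemma motz_not_sos : ¬ IsSumSq motz := by
  intro hsos
  obtain ⟨n, f, hpf⟩ := isSumSq_exists hsos
  have hdeg3 : ∀ i, (f i).totalDegree ≤ 3 := by
    intro i
    apply totalDegree_le_of_sq_le motz_td
    intro z
    have h0 : eval z motz = ∑ j, (eval z (f j)) * (eval z (f j)) := by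
      rw [hpf, map_sum]; simp
    rw [h0, sq]
    exact Finset.single_le_sum (f := fun j => eval z (f j) * eval z (f j))
      (fun j _ => mul_self_nonneg _) (Finset.mem_univ i)
  have hcoeff : ∀ (u v : ℕ), coeff (fd u v) motz = ∑ i, coeff (fd u v) (f i * f i) := by
    intro u v
    rw [hpf, MvPolynomial.coeff_sum]
  obtain ⟨c60, c06, c40, c04, c20, c02, c22⟩ := motz_coeffs
  -- x³ and y³ coefficients vanish
  have E1 : ∑ i, (coeff (fd 3 0) (f i))^2 = 0 := by
    rw [Finset.sum_congr rfl (fun i _ => (coeff_sq_60 (hdeg3 i)).symm), ← hcoeff, c60]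
  have E2 : ∑ i, (coeff (fd 0 3) (f i))^2 = 0 := by
    rw [Finset.sum_congr rfl (fun i _ => (coeff_sq_06 (hdeg3 i)).symm), ← hcoeff, c06]
  have Z30 : ∀ i, coeff (fd 3 0) (f i) = 0 := fun i =>
    pow_eq_zero_iff (two_ne_zero) |>.mp
      ((Finset.sum_eq_zero_iff_of_nonneg (fun j _ => sq_nonneg _)).mp E1 i (Finset.mem_univ i))
  have Z03 : ∀ i, coeff (fd 0 3) (f i) = 0 := fun i =>
    pow_eq_zero_iff (two_ne_zero) |>.mp
      ((Finset.sum_eq_zero_iff_of_nonneg (fun j _ => sq_nonneg _)).mp E2 i (Finset.mem_univ i))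
  -- x² and y² coefficients vanish
  have E3 : ∑ i, (coeff (fd 2 0) (f i))^2 = 0 := by
    have := hcoeff 4 0
    rw [c40, Finset.sum_congr rfl (fun i _ => coeff_sq_40 (hdeg3 i))] at this
    rw [Finset.sum_congr rfl (fun i _ => by rw [Z30 i]; ring :
      ∀ i ∈ Finset.univ, (coeff (fd 2 0) (f i))^2
        = (coeff (fd 2 0) (f i))^2 + 2 * (coeff (fd 1 0) (f i) * coeff (fd 3 0) (f i)))]
    exact this.symm
  have E4 : ∑ i, (coeff (fd 0 2) (f i))^2 = 0 := by
    have := hcoeff 0 4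
    rw [c04, Finset.sum_congr rfl (fun i _ => coeff_sq_04 (hdeg3 i))] at this
    rw [Finset.sum_congr rfl (fun i _ => by rw [Z03 i]; ring :
      ∀ i ∈ Finset.univ, (coeff (fd 0 2) (f i))^2
        = (coeff (fd 0 2) (f i))^2 + 2 * (coeff (fd 0 1) (f i) * coeff (fd 0 3) (f i)))]
    exact this.symm
  have Z20 : ∀ i, coeff (fd 2 0) (f i) = 0 := fun i =>
    pow_eq_zero_iff (two_ne_zero) |>.mp
      ((Finset.sum_eq_zero_iff_of_nonneg (fun j _ => sq_nonneg _)).mp E3 i (Finset.mem_univ i))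
  have Z02 : ∀ i, coeff (fd 0 2) (f i) = 0 := fun i =>
    pow_eq_zero_iff (two_ne_zero) |>.mp
      ((Finset.sum_eq_zero_iff_of_nonneg (fun j _ => sq_nonneg _)).mp E4 i (Finset.mem_univ i))
  -- x and y coefficients vanish
  have E5 : ∑ i, (coeff (fd 1 0) (f i))^2 = 0 := by
    have := hcoeff 2 0
    rw [c20, Finset.sum_congr rfl (fun i _ => coeff_sq_20 (hdeg3 i))] at this
    rw [Finset.sum_congr rfl (fun i _ => by rw [Z20 i]; ring :
      ∀ i ∈ Finset.univ, (coeff (fd 1 0) (f i))^2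
        = (coeff (fd 1 0) (f i))^2 + 2 * (coeff (fd 0 0) (f i) * coeff (fd 2 0) (f i)))]
    exact this.symm
  have E6 : ∑ i, (coeff (fd 0 1) (f i))^2 = 0 := by
    have := hcoeff 0 2
    rw [c02, Finset.sum_congr rfl (fun i _ => coeff_sq_02 (hdeg3 i))] at this
    rw [Finset.sum_congr rfl (fun i _ => by rw [Z02 i]; ring :
      ∀ i ∈ Finset.univ, (coeff (fd 0 1) (f i))^2
        = (coeff (fd 0 1) (f i))^2 + 2 * (coeff (fd 0 0) (f i) * coeff (fd 0 2) (f i)))]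
    exact this.symm
  have Z10 : ∀ i, coeff (fd 1 0) (f i) = 0 := fun i =>
    pow_eq_zero_iff (two_ne_zero) |>.mp
      ((Finset.sum_eq_zero_iff_of_nonneg (fun j _ => sq_nonneg _)).mp E5 i (Finset.mem_univ i))
  have Z01 : ∀ i, coeff (fd 0 1) (f i) = 0 := fun i =>
    pow_eq_zero_iff (two_ne_zero) |>.mp
      ((Finset.sum_eq_zero_iff_of_nonneg (fun j _ => sq_nonneg _)).mp E6 i (Finset.mem_univ i))
  -- the x²y² coefficient gives the contradiction
  have E7 : ∑ i, (coeff (fd 1 1) (f i))^2 = -3 := by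
    have := hcoeff 2 2
    rw [c22, Finset.sum_congr rfl (fun i _ => coeff_sq_22 (hdeg3 i))] at this
    rw [Finset.sum_congr rfl (fun i _ => by rw [Z10 i, Z01 i, Z20 i]; ring :
      ∀ i ∈ Finset.univ, (coeff (fd 1 1) (f i))^2
        = (coeff (fd 1 1) (f i))^2 + 2 * (coeff (fd 1 0) (f i) * coeff (fd 1 2) (f i))
          + 2 * (coeff (fd 0 1) (f i) * coeff (fd 2 1) (f i))
          + 2 * (coeff (fd 2 0) (f i) * coeff (fd 0 2) (f i)))]
    exact this.symm
  have hnn : (0:ℝ) ≤ ∑ i, (coeff (fd 1 1) (f i))^2 :=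
    Finset.sum_nonneg (fun i _ => sq_nonneg _)
  linarith [E7, hnn]

end MotzkinAux
end

open MotzkinAux in
/-- The dehomogenized Motzkin polynomial `1 + x₁⁴x₂² + x₁²x₂⁴ - 3x₁²x₂²` is nonnegative
on `ℝ²` but is not a sum of squares of polynomials. -/
theorem motzkin_nonneg_not_sos :
    (∀ x : Fin 2 → ℝ, 0 ≤ eval x
      ((1 : MvPolynomial (Fin 2) ℝ) + (X 0)^4 * (X 1)^2 + (X 0)^2 * (X 1)^4
        - 3 * (X 0)^2 * (X 1)^2))
    ∧ ¬ IsSumSq ((1 : MvPolynomial (Fin 2) ℝ) + (X 0)^4 * (X 1)^2 + (X 0)^2 * (X 1)^4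
        - 3 * (X 0)^2 * (X 1)^2) :=
  ⟨motz_eval_nonneg, motz_not_sos⟩
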